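/- Invertibility of the left discontinuous product rule in DAf: for all types A and B and 1 ≤ k ≤ sA, if the sequent Δ⟨vec(A⊙_kB)⟩ ⊢w C (possibly containing one focalised formula, the indicated occurrence of A⊙_kB unfocused) is derivable in the weakly focalised calculus DAf, then Δ⟨vec(A)|_k vec(B)⟩ ⊢w C (with the same focus, if any) is derivable in DAf. -/

import Mathlib

/-!
Formalisation of the displacement calculus with additives DA, the weakly
focalised calculus DAf (with and without Cut) and the strongly focalised
calculus DAFoc, following Morrill–Valentín.
-/

namespace DA

/-- Bias of atomic types. -/
inductive Bias : Type where
  | pos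
  | neg
deriving DecidableEq

/-- Types of the displacement calculus with additives, indexed by their sort. -/
inductive Ty : ℕ → Type where
  | atom (b : Bias) (name : ℕ) (i : ℕ) : Ty i
  | over {i j : ℕ} : Ty (i + j) → Ty j → Ty i                                   -- C / B
  | under {i j : ℕ} : Ty i → Ty (i + j) → Ty j                                  -- A \ C
  | prod {i j : ℕ} : Ty i → Ty j → Ty (i + j)                                   -- A • B
  | unitI : Ty 0                                                                -- I
  | circ {i j : ℕ} (k : ℕ) (hk : 1 ≤ k ∧ k ≤ i + 1) : Ty (i + j) → Ty j → Ty (i + 1)   -- C ↑ₖ B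
  | infx {i j : ℕ} (k : ℕ) (hk : 1 ≤ k ∧ k ≤ i + 1) : Ty (i + 1) → Ty (i + j) → Ty j   -- A ↓ₖ C
  | wprod {i j : ℕ} (k : ℕ) (hk : 1 ≤ k ∧ k ≤ i + 1) : Ty (i + 1) → Ty j → Ty (i + j)  -- A ⊙ₖ B
  | unitJ : Ty 1                                                                -- J
  | amp {i : ℕ} : Ty i → Ty i → Ty i                                            -- A & B
  | oplus {i : ℕ} : Ty i → Ty i → Ty i                                          -- A ⊕ B

/-- `posb A = true` iff `A` is synchronous as an output (positive output /
asynchronous as an input): positive atoms and `•`, `I`, `⊙ₖ`, `J`, `⊕`.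
Otherwise `A` is synchronous as an input (negative atoms and `/`, `\`, `↑ₖ`,
`↓ₖ`, `&`). -/
def posb {i : ℕ} : Ty i → Bool
  | .atom .pos _ _ => true
  | .atom .neg _ _ => false
  | .over _ _ => false
  | .under _ _ => false
  | .prod _ _ => true
  | .unitI => true
  | .circ _ _ _ _ => false
  | .infx _ _ _ _ => false
  | .wprod _ _ _ _ => true
  | .unitJ => true
  | .amp _ _ => false
  | .oplus _ _ => true

def isAtom {i : ℕ} : Ty i → Bool
  | .atom _ _ _ => true
  | _ => false

/-- Elements of configurations: the separator `1`, types of sort 0, and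
figures `A{Δ₁ : … : Δ_{sA}}` of types of sort `> 0`; together with *boxed*
(focalised) variants of the latter two, used by the focalised calculi. -/
inductive BTree : Type where
  | sep : BTree
  | type0 : Ty 0 → BTree
  | btype0 : Ty 0 → BTree
  | fig {i : ℕ} : Ty (i + 1) → (Fin (i + 1) → List BTree) → BTree
  | bfig {i : ℕ} : Ty (i + 1) → (Fin (i + 1) → List BTree) → BTree

/-- Configurations (possibly containing boxed, i.e. focalised, occurrences). -/
abbrev BConfig := List BTree

/-- The figure `vec(A)` of a type `A`. -/
def vecT {i : ℕ} (A : Ty i) : BTree :=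
  match i, A with
  | 0, A => .type0 A
  | _ + 1, A => .fig A (fun _ => [BTree.sep])

def vec {i : ℕ} (A : Ty i) : BConfig := [vecT A]

/-- The boxed (focalised) figure `[vec(A)]` of a type `A`. -/
def bvecT {i : ℕ} (A : Ty i) : BTree :=
  match i, A with
  | 0, A => .btype0 A
  | _ + 1, A => .bfig A (fun _ => [BTree.sep])

def bvec {i : ℕ} (A : Ty i) : BConfig := [bvecT A]

/-- The premise occurrence of an active antecedent subformula in a synchronous
rule: focalised (boxed) if it is synchronous in the antecedent (negative),
unfocalised if asynchronous (positive). -/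
def fvec {i : ℕ} (A : Ty i) : BConfig := if posb A then vec A else bvec A

/-! Sort of a tree / configuration: its number of separators. -/
mutual
  inductive TreeSort : BTree → ℕ → Prop where
    | sep : TreeSort .sep 1
    | type0 (A : Ty 0) : TreeSort (.type0 A) 0
    | btype0 (A : Ty 0) : TreeSort (.btype0 A) 0
    | fig {i : ℕ} (A : Ty (i + 1)) (args : Fin (i + 1) → BConfig) (ns : Fin (i + 1) → ℕ) :
        (∀ k, ConfigSort (args k) (ns k)) → TreeSort (.fig A args) (Finset.univ.sum ns)
    | bfig {i : ℕ} (A : Ty (i + 1)) (args : Fin (i + 1) → BConfig) (ns : Fin (i + 1) → ℕ) :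
        (∀ k, ConfigSort (args k) (ns k)) → TreeSort (.bfig A args) (Finset.univ.sum ns)
  inductive ConfigSort : BConfig → ℕ → Prop where
    | nil : ConfigSort [] 0
    | cons {t : BTree} {ts : BConfig} {n m : ℕ} :
        TreeSort t n → ConfigSort ts m → ConfigSort (t :: ts) (n + m)
end

/-! Number of boxed (focalised) formula occurrences in a tree / configuration. -/
mutual
  inductive TBoxes : BTree → ℕ → Prop where
    | sep : TBoxes .sep 0
    | type0 (A : Ty 0) : TBoxes (.type0 A) 0
    | btype0 (A : Ty 0) : TBoxes (.btype0 A) 1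
    | fig {i : ℕ} (A : Ty (i + 1)) (args : Fin (i + 1) → BConfig) (ns : Fin (i + 1) → ℕ) :
        (∀ k, CBoxes (args k) (ns k)) → TBoxes (.fig A args) (Finset.univ.sum ns)
    | bfig {i : ℕ} (A : Ty (i + 1)) (args : Fin (i + 1) → BConfig) (ns : Fin (i + 1) → ℕ) :
        (∀ k, CBoxes (args k) (ns k)) → TBoxes (.bfig A args) (Finset.univ.sum ns + 1)
  inductive CBoxes : BConfig → ℕ → Prop where
    | nil : CBoxes [] 0
    | cons {t : BTree} {ts : BConfig} {n m : ℕ} :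
        TBoxes t n → CBoxes ts m → CBoxes (t :: ts) (n + m)
end

/-! The fold `Γ ⊗ ⟨Δ₁ : … : Δ_i⟩`: `FoldC Γ [Δ₁,…,Δ_i] res` holds iff `res` is
the result of replacing the successive separators of `Γ` by `Δ₁,…,Δ_i`. -/
mutual
  inductive FoldT : BTree → List BConfig → BConfig → Prop where
    | sep (Δ : BConfig) : FoldT .sep [Δ] Δ
    | type0 (A : Ty 0) : FoldT (.type0 A) [] [.type0 A]
    | btype0 (A : Ty 0) : FoldT (.btype0 A) [] [.btype0 A]
    | fig {i : ℕ} (A : Ty (i + 1)) (args args' : Fin (i + 1) → BConfig)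
        (reps : Fin (i + 1) → List BConfig) :
        (∀ k, FoldC (args k) (reps k) (args' k)) →
        FoldT (.fig A args) (List.ofFn reps).flatten [.fig A args']
    | bfig {i : ℕ} (A : Ty (i + 1)) (args args' : Fin (i + 1) → BConfig)
        (reps : Fin (i + 1) → List BConfig) :
        (∀ k, FoldC (args k) (reps k) (args' k)) →
        FoldT (.bfig A args) (List.ofFn reps).flatten [.bfig A args']
  inductive FoldC : BConfig → List BConfig → BConfig → Prop where
    | nil : FoldC [] [] []
    | cons {t : BTree} {ts : BConfig} {r1 r2 : List BConfig} {c1 c2 : BConfig} :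
        FoldT t r1 c1 → FoldC ts r2 c2 → FoldC (t :: ts) (r1 ++ r2) (c1 ++ c2)
end

/-- The `k`-th metalinguistic wrap `Δ |ₖ Γ`: `Wrap Δ k Γ res` holds iff `res`
is the result of replacing the `k`-th separator of `Δ` by `Γ`. -/
def Wrap (Δ : BConfig) (k : ℕ) (Γ res : BConfig) : Prop :=
  ∃ n : ℕ, ConfigSort Δ n ∧
    FoldC Δ ((List.replicate n ([BTree.sep] : BConfig)).set (k - 1) Γ) res

/-! One-hole contexts `Δ₀(—)` for configurations: the hole is a configuration
position, either at the top level or nested inside a figure argument. -/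
mutual
  inductive THole : Type where
    | fig {i : ℕ} (A : Ty (i + 1)) (args : Fin (i + 1) → BConfig) (k : Fin (i + 1))
        (c : CHole) : THole
    | bfig {i : ℕ} (A : Ty (i + 1)) (args : Fin (i + 1) → BConfig) (k : Fin (i + 1))
        (c : CHole) : THole
  inductive CHole : Type where
    | top (pre post : BConfig) : CHole
    | deep (pre : BConfig) (t : THole) (post : BConfig) : CHole
end

/-! Plugging a configuration into a one-hole context. -/
mutual
  inductive PlugT : THole → BConfig → BTree → Prop where
    | fig {i : ℕ} (A : Ty (i + 1)) (args : Fin (i + 1) → BConfig) (k : Fin (i + 1))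
        (c : CHole) (Γ plugged : BConfig) :
        PlugC c Γ plugged → PlugT (.fig A args k c) Γ (.fig A (Function.update args k plugged))
    | bfig {i : ℕ} (A : Ty (i + 1)) (args : Fin (i + 1) → BConfig) (k : Fin (i + 1))
        (c : CHole) (Γ plugged : BConfig) :
        PlugC c Γ plugged → PlugT (.bfig A args k c) Γ (.bfig A (Function.update args k plugged))
  inductive PlugC : CHole → BConfig → BConfig → Prop where
    | top (pre post Γ : BConfig) : PlugC (.top pre post) Γ (pre ++ Γ ++ post)
    | deep (pre post Γ : BConfig) (t : THole) (tr : BTree) :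
        PlugT t Γ tr → PlugC (.deep pre t post) Γ (pre ++ tr :: post)
end

/-- The data `Δ⟨—⟩ = Δ₀(— ⊗ ⟨Δ₁ : … : Δ_i⟩)` of a context in the generalised
sense of the displacement calculus. -/
structure Zone : Type where
  hole : CHole
  reps : List BConfig

/-- `Sub Z Γ res` holds iff `res = Δ⟨Γ⟩` for the context `Δ⟨—⟩` given by `Z`,
i.e. `res = Δ₀(Γ ⊗ ⟨Δ₁ : … : Δ_i⟩)`. -/
def Sub (Z : Zone) (Γ res : BConfig) : Prop :=
  ∃ folded : BConfig, FoldC Γ Z.reps folded ∧ PlugC Z.hole folded res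

/-- The displacement calculus with additives DA: `DADeriv Δ i A` is
derivability of the sequent `Δ ⇒ A` (identity axiom restricted to atoms). -/
inductive DADeriv : BConfig → ∀ i : ℕ, Ty i → Prop where
  | id (b : Bias) (name i : ℕ) :
      DADeriv (vec (.atom b name i)) i (.atom b name i)
  | overR {i j : ℕ} {Γ : BConfig} {C : Ty (i + j)} {B : Ty j} :
      DADeriv (Γ ++ vec B) (i + j) C → DADeriv Γ i (.over C B)
  | overL {i j d : ℕ} {Γ s1 s2 : BConfig} {B : Ty j} {C : Ty (i + j)} {Z : Zone} {D : Ty d} :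
      DADeriv Γ j B → Sub Z (vec C) s1 → DADeriv s1 d D →
      Sub Z (vec (.over C B) ++ Γ) s2 → DADeriv s2 d D
  | underR {i j : ℕ} {Γ : BConfig} {A : Ty i} {C : Ty (i + j)} :
      DADeriv (vec A ++ Γ) (i + j) C → DADeriv Γ j (.under A C)
  | underL {i j d : ℕ} {Γ s1 s2 : BConfig} {A : Ty i} {C : Ty (i + j)} {Z : Zone} {D : Ty d} :
      DADeriv Γ i A → Sub Z (vec C) s1 → DADeriv s1 d D →
      Sub Z (Γ ++ vec (.under A C)) s2 → DADeriv s2 d D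
  | prodR {i j : ℕ} {Γ1 Γ2 : BConfig} {A : Ty i} {B : Ty j} :
      DADeriv Γ1 i A → DADeriv Γ2 j B → DADeriv (Γ1 ++ Γ2) (i + j) (.prod A B)
  | prodL {i j d : ℕ} {s1 s2 : BConfig} {A : Ty i} {B : Ty j} {Z : Zone} {D : Ty d} :
      Sub Z (vec A ++ vec B) s1 → DADeriv s1 d D →
      Sub Z (vec (.prod A B)) s2 → DADeriv s2 d D
  | unitIR : DADeriv [] 0 .unitI
  | unitIL {d : ℕ} {s1 s2 : BConfig} {Z : Zone} {D : Ty d} :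
      Sub Z [] s1 → DADeriv s1 d D → Sub Z (vec .unitI) s2 → DADeriv s2 d D
  | circR {i j : ℕ} (k : ℕ) (hk : 1 ≤ k ∧ k ≤ i + 1) {Γ w : BConfig}
      {C : Ty (i + j)} {B : Ty j} :
      Wrap Γ k (vec B) w → DADeriv w (i + j) C → DADeriv Γ (i + 1) (.circ k hk C B)
  | circL {i j d : ℕ} (k : ℕ) (hk : 1 ≤ k ∧ k ≤ i + 1) {Γ w s1 s2 : BConfig}
      {C : Ty (i + j)} {B : Ty j} {Z : Zone} {D : Ty d} :
      DADeriv Γ j B → Sub Z (vec C) s1 → DADeriv s1 d D →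
      Wrap (vec (Ty.circ k hk C B)) k Γ w → Sub Z w s2 → DADeriv s2 d D
  | infxR {i j : ℕ} (k : ℕ) (hk : 1 ≤ k ∧ k ≤ i + 1) {Γ w : BConfig}
      {A : Ty (i + 1)} {C : Ty (i + j)} :
      Wrap (vec A) k Γ w → DADeriv w (i + j) C → DADeriv Γ j (.infx k hk A C)
  | infxL {i j d : ℕ} (k : ℕ) (hk : 1 ≤ k ∧ k ≤ i + 1) {Γ w s1 s2 : BConfig}
      {A : Ty (i + 1)} {C : Ty (i + j)} {Z : Zone} {D : Ty d} :
      DADeriv Γ (i + 1) A → Sub Z (vec C) s1 → DADeriv s1 d D →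
      Wrap Γ k (vec (Ty.infx k hk A C)) w → Sub Z w s2 → DADeriv s2 d D
  | wprodR {i j : ℕ} (k : ℕ) (hk : 1 ≤ k ∧ k ≤ i + 1) {Γ1 Γ2 w : BConfig}
      {A : Ty (i + 1)} {B : Ty j} :
      DADeriv Γ1 (i + 1) A → DADeriv Γ2 j B → Wrap Γ1 k Γ2 w →
      DADeriv w (i + j) (.wprod k hk A B)
  | wprodL {i j d : ℕ} (k : ℕ) (hk : 1 ≤ k ∧ k ≤ i + 1) {w s1 s2 : BConfig}
      {A : Ty (i + 1)} {B : Ty j} {Z : Zone} {D : Ty d} :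
      Wrap (vec A) k (vec B) w → Sub Z w s1 → DADeriv s1 d D →
      Sub Z (vec (.wprod k hk A B)) s2 → DADeriv s2 d D
  | unitJR : DADeriv [BTree.sep] 1 .unitJ
  | unitJL {d : ℕ} {s1 s2 : BConfig} {Z : Zone} {D : Ty d} :
      Sub Z [BTree.sep] s1 → DADeriv s1 d D → Sub Z (vec .unitJ) s2 → DADeriv s2 d D
  | ampR {i : ℕ} {Γ : BConfig} {A B : Ty i} :
      DADeriv Γ i A → DADeriv Γ i B → DADeriv Γ i (.amp A B)
  | ampL1 {i d : ℕ} {s1 s2 : BConfig} {A B : Ty i} {Z : Zone} {D : Ty d} :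
      Sub Z (vec A) s1 → DADeriv s1 d D → Sub Z (vec (.amp A B)) s2 → DADeriv s2 d D
  | ampL2 {i d : ℕ} {s1 s2 : BConfig} {A B : Ty i} {Z : Zone} {D : Ty d} :
      Sub Z (vec B) s1 → DADeriv s1 d D → Sub Z (vec (.amp A B)) s2 → DADeriv s2 d D
  | oplusR1 {i : ℕ} {Γ : BConfig} {A B : Ty i} :
      DADeriv Γ i A → DADeriv Γ i (.oplus A B)
  | oplusR2 {i : ℕ} {Γ : BConfig} {A B : Ty i} :
      DADeriv Γ i B → DADeriv Γ i (.oplus A B)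
  | oplusL {i d : ℕ} {s1 s2 s3 : BConfig} {A B : Ty i} {Z : Zone} {D : Ty d} :
      Sub Z (vec A) s1 → DADeriv s1 d D → Sub Z (vec B) s2 → DADeriv s2 d D →
      Sub Z (vec (.oplus A B)) s3 → DADeriv s3 d D

/-! Occurrence of a type satisfying `φ` somewhere in a configuration
(as the head type of a tree/figure, possibly nested). -/
mutual
  inductive TOcc (φ : ∀ j : ℕ, Ty j → Prop) : BTree → Prop where
    | type0 {A : Ty 0} : φ 0 A → TOcc φ (.type0 A)
    | btype0 {A : Ty 0} : φ 0 A → TOcc φ (.btype0 A)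
    | figHead {i : ℕ} {A : Ty (i + 1)} {args : Fin (i + 1) → BConfig} :
        φ (i + 1) A → TOcc φ (.fig A args)
    | bfigHead {i : ℕ} {A : Ty (i + 1)} {args : Fin (i + 1) → BConfig} :
        φ (i + 1) A → TOcc φ (.bfig A args)
    | figArg {i : ℕ} {A : Ty (i + 1)} {args : Fin (i + 1) → BConfig} (k : Fin (i + 1)) :
        COcc φ (args k) → TOcc φ (.fig A args)
    | bfigArg {i : ℕ} {A : Ty (i + 1)} {args : Fin (i + 1) → BConfig} (k : Fin (i + 1)) :
        COcc φ (args k) → TOcc φ (.bfig A args)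
  inductive COcc (φ : ∀ j : ℕ, Ty j → Prop) : BConfig → Prop where
    | head {t : BTree} {ts : BConfig} : TOcc φ t → COcc φ (t :: ts)
    | tail {t : BTree} {ts : BConfig} : COcc φ ts → COcc φ (t :: ts)
end

/-- The sequent `Δ ⊢ A` contains a complex (non-atomic) asynchronous formula
occurrence: a non-atomic positive type in the antecedent, or a non-atomic
negative succedent. -/
def HasComplexAsync (Δ : BConfig) (i : ℕ) (A : Ty i) : Prop :=
  COcc (fun _ B => posb B = true ∧ isAtom B = false) Δ ∨
    (posb A = false ∧ isAtom A = false)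

/-- A sequent (antecedent plus succedent-focus flag) contains at most one
focalised formula. -/
def AtMostOne (Δ : BConfig) (f : Bool) : Prop :=
  if f then CBoxes Δ 0 else (CBoxes Δ 0 ∨ CBoxes Δ 1)

/-- A sequent contains exactly one focalised formula. -/
def ExactlyOne (Δ : BConfig) (f : Bool) : Prop :=
  if f then CBoxes Δ 0 else CBoxes Δ 1

/-- Side condition of the strongly focalised calculus: a sequent containing a
focalised formula contains no complex asynchronous formula occurrence (and
vice versa). -/
def Ok (strong : Bool) (Δ : BConfig) (f : Bool) (i : ℕ) (A : Ty i) : Prop :=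
  strong = true → ¬ ((f = true ∨ ¬ CBoxes Δ 0) ∧ HasComplexAsync Δ i A)

/-- Focalised sequent calculus: `DW cuts strong Δ f i A` is derivability of
the sequent `Δ ⊢ A`, whose succedent is focalised iff `f = true` and whose
focalised antecedent formulas are the boxed occurrences of `Δ`.
`cuts = true` allows the Cut rules (weakly focalised calculus DAf);
`cuts = false` is Cut-free DAf; `strong = true` additionally imposes the
strong focalisation discipline (DAFoc, taken with `cuts = false`). -/
inductive DW (cuts strong : Bool) : BConfig → Bool → ∀ i : ℕ, Ty i → Prop where
  -- identity axioms, restricted to atoms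
  | idP (name i : ℕ) :
      DW cuts strong (vec (.atom .pos name i)) true i (.atom .pos name i)
  | idQ (name i : ℕ) :
      DW cuts strong (bvec (.atom .neg name i)) false i (.atom .neg name i)
  -- focusing rules
  | focR {i : ℕ} {Δ : BConfig} {P : Ty i} :
      posb P = true →
      DW cuts strong Δ true i P →
      AtMostOne Δ false → Ok strong Δ false i P →
      DW cuts strong Δ false i P
  | focL {j d : ℕ} {Q : Ty j} {D : Ty d} {Z : Zone} {s1 s2 : BConfig} :
      posb Q = false →
      Sub Z (bvec Q) s1 → DW cuts strong s1 false d D →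
      Sub Z (vec Q) s2 → AtMostOne s2 false → Ok strong s2 false d D →
      DW cuts strong s2 false d D
  -- asynchronous right rules
  | overR {i j : ℕ} {Γ : BConfig} {C : Ty (i + j)} {B : Ty j} :
      DW cuts strong (Γ ++ vec B) false (i + j) C →
      AtMostOne Γ false → Ok strong Γ false i (.over C B) →
      DW cuts strong Γ false i (.over C B)
  | underR {i j : ℕ} {Γ : BConfig} {A : Ty i} {C : Ty (i + j)} :
      DW cuts strong (vec A ++ Γ) false (i + j) C →
      AtMostOne Γ false → Ok strong Γ false j (.under A C) →
      DW cuts strong Γ false j (.under A C)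
  | circR {i j : ℕ} (k : ℕ) (hk : 1 ≤ k ∧ k ≤ i + 1) {Γ w : BConfig}
      {C : Ty (i + j)} {B : Ty j} :
      Wrap Γ k (vec B) w → DW cuts strong w false (i + j) C →
      AtMostOne Γ false → Ok strong Γ false (i + 1) (.circ k hk C B) →
      DW cuts strong Γ false (i + 1) (.circ k hk C B)
  | infxR {i j : ℕ} (k : ℕ) (hk : 1 ≤ k ∧ k ≤ i + 1) {Γ w : BConfig}
      {A : Ty (i + 1)} {C : Ty (i + j)} :
      Wrap (vec A) k Γ w → DW cuts strong w false (i + j) C →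
      AtMostOne Γ false → Ok strong Γ false j (.infx k hk A C) →
      DW cuts strong Γ false j (.infx k hk A C)
  | ampR {i : ℕ} {Γ : BConfig} {A B : Ty i} :
      DW cuts strong Γ false i A → DW cuts strong Γ false i B →
      AtMostOne Γ false → Ok strong Γ false i (.amp A B) →
      DW cuts strong Γ false i (.amp A B)
  -- asynchronous left rules
  | prodL {i j d : ℕ} {f : Bool} {s1 s2 : BConfig} {A : Ty i} {B : Ty j}
      {Z : Zone} {D : Ty d} :
      Sub Z (vec A ++ vec B) s1 → DW cuts strong s1 f d D →
      Sub Z (vec (.prod A B)) s2 → AtMostOne s2 f → Ok strong s2 f d D →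
      DW cuts strong s2 f d D
  | unitIL {d : ℕ} {f : Bool} {s1 s2 : BConfig} {Z : Zone} {D : Ty d} :
      Sub Z [] s1 → DW cuts strong s1 f d D →
      Sub Z (vec .unitI) s2 → AtMostOne s2 f → Ok strong s2 f d D →
      DW cuts strong s2 f d D
  | wprodL {i j d : ℕ} (k : ℕ) (hk : 1 ≤ k ∧ k ≤ i + 1) {f : Bool}
      {w s1 s2 : BConfig} {A : Ty (i + 1)} {B : Ty j} {Z : Zone} {D : Ty d} :
      Wrap (vec A) k (vec B) w → Sub Z w s1 → DW cuts strong s1 f d D →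
      Sub Z (vec (.wprod k hk A B)) s2 → AtMostOne s2 f → Ok strong s2 f d D →
      DW cuts strong s2 f d D
  | unitJL {d : ℕ} {f : Bool} {s1 s2 : BConfig} {Z : Zone} {D : Ty d} :
      Sub Z [BTree.sep] s1 → DW cuts strong s1 f d D →
      Sub Z (vec .unitJ) s2 → AtMostOne s2 f → Ok strong s2 f d D →
      DW cuts strong s2 f d D
  | oplusL {i d : ℕ} {f : Bool} {s1 s2 s3 : BConfig} {A B : Ty i} {Z : Zone} {D : Ty d} :
      Sub Z (vec A) s1 → DW cuts strong s1 f d D →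
      Sub Z (vec B) s2 → DW cuts strong s2 f d D →
      Sub Z (vec (.oplus A B)) s3 → AtMostOne s3 f → Ok strong s3 f d D →
      DW cuts strong s3 f d D
  -- synchronous left rules (active formula focalised)
  | overL {i j d : ℕ} {Γ s1 s2 : BConfig} {B : Ty j} {C : Ty (i + j)} {Z : Zone} {D : Ty d} :
      DW cuts strong Γ (posb B) j B →
      Sub Z (fvec C) s1 → DW cuts strong s1 false d D →
      Sub Z (bvec (.over C B) ++ Γ) s2 → AtMostOne s2 false → Ok strong s2 false d D →
      DW cuts strong s2 false d D
  | underL {i j d : ℕ} {Γ s1 s2 : BConfig} {A : Ty i} {C : Ty (i + j)} {Z : Zone} {D : Ty d} :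
      DW cuts strong Γ (posb A) i A →
      Sub Z (fvec C) s1 → DW cuts strong s1 false d D →
      Sub Z (Γ ++ bvec (.under A C)) s2 → AtMostOne s2 false → Ok strong s2 false d D →
      DW cuts strong s2 false d D
  | circL {i j d : ℕ} (k : ℕ) (hk : 1 ≤ k ∧ k ≤ i + 1) {Γ w s1 s2 : BConfig}
      {C : Ty (i + j)} {B : Ty j} {Z : Zone} {D : Ty d} :
      DW cuts strong Γ (posb B) j B →
      Sub Z (fvec C) s1 → DW cuts strong s1 false d D →
      Wrap (bvec (Ty.circ k hk C B)) k Γ w → Sub Z w s2 →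
      AtMostOne s2 false → Ok strong s2 false d D →
      DW cuts strong s2 false d D
  | infxL {i j d : ℕ} (k : ℕ) (hk : 1 ≤ k ∧ k ≤ i + 1) {Γ w s1 s2 : BConfig}
      {A : Ty (i + 1)} {C : Ty (i + j)} {Z : Zone} {D : Ty d} :
      DW cuts strong Γ (posb A) (i + 1) A →
      Sub Z (fvec C) s1 → DW cuts strong s1 false d D →
      Wrap Γ k (bvec (Ty.infx k hk A C)) w → Sub Z w s2 →
      AtMostOne s2 false → Ok strong s2 false d D →
      DW cuts strong s2 false d D
  | ampL1 {i d : ℕ} {s1 s2 : BConfig} {A B : Ty i} {Z : Zone} {D : Ty d} :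
      Sub Z (fvec A) s1 → DW cuts strong s1 false d D →
      Sub Z (bvec (.amp A B)) s2 → AtMostOne s2 false → Ok strong s2 false d D →
      DW cuts strong s2 false d D
  | ampL2 {i d : ℕ} {s1 s2 : BConfig} {A B : Ty i} {Z : Zone} {D : Ty d} :
      Sub Z (fvec B) s1 → DW cuts strong s1 false d D →
      Sub Z (bvec (.amp A B)) s2 → AtMostOne s2 false → Ok strong s2 false d D →
      DW cuts strong s2 false d D
  -- synchronous right rules (succedent focalised)
  | prodR {i j : ℕ} {Γ1 Γ2 : BConfig} {A : Ty i} {B : Ty j} :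
      DW cuts strong Γ1 (posb A) i A → DW cuts strong Γ2 (posb B) j B →
      AtMostOne (Γ1 ++ Γ2) true → Ok strong (Γ1 ++ Γ2) true (i + j) (.prod A B) →
      DW cuts strong (Γ1 ++ Γ2) true (i + j) (.prod A B)
  | unitIR : DW cuts strong [] true 0 .unitI
  | wprodR {i j : ℕ} (k : ℕ) (hk : 1 ≤ k ∧ k ≤ i + 1) {Γ1 Γ2 w : BConfig}
      {A : Ty (i + 1)} {B : Ty j} :
      DW cuts strong Γ1 (posb A) (i + 1) A → DW cuts strong Γ2 (posb B) j B →
      Wrap Γ1 k Γ2 w →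
      AtMostOne w true → Ok strong w true (i + j) (.wprod k hk A B) →
      DW cuts strong w true (i + j) (.wprod k hk A B)
  | unitJR : DW cuts strong [BTree.sep] true 1 .unitJ
  | oplusR1 {i : ℕ} {Γ : BConfig} {A B : Ty i} :
      DW cuts strong Γ (posb A) i A →
      AtMostOne Γ true → Ok strong Γ true i (.oplus A B) →
      DW cuts strong Γ true i (.oplus A B)
  | oplusR2 {i : ℕ} {Γ : BConfig} {A B : Ty i} :
      DW cuts strong Γ (posb B) i B →
      AtMostOne Γ true → Ok strong Γ true i (.oplus A B) →
      DW cuts strong Γ true i (.oplus A B)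
  -- Cut rules (weakly focalised calculus only)
  | pcut1 {j d : ℕ} {f : Bool} {Γ s1 s2 : BConfig} {P : Ty j} {Z : Zone} {C : Ty d} :
      cuts = true → posb P = true →
      DW cuts strong Γ true j P →
      Sub Z (vec P) s1 → DW cuts strong s1 f d C →
      Sub Z Γ s2 → AtMostOne s2 f →
      DW cuts strong s2 f d C
  | pcut2 {j d : ℕ} {Γ s1 s2 : BConfig} {N : Ty j} {Z : Zone} {C : Ty d} :
      cuts = true → posb N = false →
      DW cuts strong Γ false j N →
      Sub Z (bvec N) s1 → DW cuts strong s1 false d C →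
      Sub Z Γ s2 → AtMostOne s2 false →
      DW cuts strong s2 false d C
  | ncut1 {j d : ℕ} {Γ s1 s2 : BConfig} {P : Ty j} {Z : Zone} {C : Ty d} :
      cuts = true → posb P = true →
      DW cuts strong Γ false j P →
      Sub Z (vec P) s1 → CBoxes s1 0 → DW cuts strong s1 false d C →
      Sub Z Γ s2 → AtMostOne s2 false →
      DW cuts strong s2 false d C
  | ncut2 {j d : ℕ} {f : Bool} {Γ s1 s2 : BConfig} {N : Ty j} {Z : Zone} {C : Ty d} :
      cuts = true → posb N = false →
      CBoxes Γ 0 → DW cuts strong Γ false j N →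
      Sub Z (vec N) s1 → DW cuts strong s1 f d C →
      Sub Z Γ s2 → AtMostOne s2 f →
      DW cuts strong s2 f d C

/-- The weakly focalised calculus DAf. -/
abbrev DAf (Δ : BConfig) (f : Bool) (i : ℕ) (A : Ty i) : Prop := DW true false Δ f i A

/-- Cut-free DAf. -/
abbrev DAfCutFree (Δ : BConfig) (f : Bool) (i : ℕ) (A : Ty i) : Prop := DW false false Δ f i A

/-- The strongly focalised calculus DAFoc. -/
abbrev DAFoc (Δ : BConfig) (f : Bool) (i : ℕ) (A : Ty i) : Prop := DW false true Δ f i A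

/-- Transport of a type along an equality of sorts. -/
def tcast {i j : ℕ} (h : i = j) (A : Ty i) : Ty j := h ▸ A

end DA

namespace DA


mutual
def tboxes : BTree → ℕ
  | .sep => 0
  | .type0 _ => 0
  | .btype0 _ => 1
  | .fig _ args => (List.ofFn (fun k => cboxes (args k))).sum
  | .bfig _ args => (List.ofFn (fun k => cboxes (args k))).sum + 1
def cboxes : List BTree → ℕ
  | [] => 0
  | t :: ts => tboxes t + cboxes ts
end

mutual
def tsort : BTree → ℕ
  | .sep => 1
  | .type0 _ => 0
  | .btype0 _ => 0
  | .fig _ args => (List.ofFn (fun k => csort (args k))).sum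
  | .bfig _ args => (List.ofFn (fun k => csort (args k))).sum
def csort : List BTree → ℕ
  | [] => 0
  | t :: ts => tsort t + csort ts
end


theorem tboxes_fig_def {i : ℕ} (A : Ty (i+1)) (args : Fin (i+1) → List BTree) :
    tboxes (.fig A args) = Finset.univ.sum (fun k => cboxes (args k)) := by
  simp only [tboxes, List.sum_ofFn]

theorem tboxes_bfig_def {i : ℕ} (A : Ty (i+1)) (args : Fin (i+1) → List BTree) :
    tboxes (.bfig A args) = Finset.univ.sum (fun k => cboxes (args k)) + 1 := by
  simp only [tboxes, List.sum_ofFn]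

theorem tsort_fig_def {i : ℕ} (A : Ty (i+1)) (args : Fin (i+1) → List BTree) :
    tsort (.fig A args) = Finset.univ.sum (fun k => csort (args k)) := by
  simp only [tsort, List.sum_ofFn]

theorem tsort_bfig_def {i : ℕ} (A : Ty (i+1)) (args : Fin (i+1) → List BTree) :
    tsort (.bfig A args) = Finset.univ.sum (fun k => csort (args k)) := by
  simp only [tsort, List.sum_ofFn]

mutual
theorem tboxes_complete : ∀ t : BTree, TBoxes t (tboxes t)
  | .sep => .sep
  | .type0 A => .type0 A
  | .btype0 A => .btype0 A
  | .fig A args => by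
      rw [tboxes_fig_def]; exact .fig A args _ (fun k => cboxes_complete (args k))
  | .bfig A args => by
      rw [tboxes_bfig_def]; exact .bfig A args _ (fun k => cboxes_complete (args k))
theorem cboxes_complete : ∀ Δ : List BTree, CBoxes Δ (cboxes Δ)
  | [] => .nil
  | t :: ts => .cons (tboxes_complete t) (cboxes_complete ts)
end

mutual
theorem treeSort_complete : ∀ t : BTree, TreeSort t (tsort t)
  | .sep => .sep
  | .type0 A => .type0 A
  | .btype0 A => .btype0 A
  | .fig A args => by
      rw [tsort_fig_def]; exact .fig A args _ (fun k => configSort_complete (args k))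
  | .bfig A args => by
      rw [tsort_bfig_def]; exact .bfig A args _ (fun k => configSort_complete (args k))
theorem configSort_complete : ∀ Δ : List BTree, ConfigSort Δ (csort Δ)
  | [] => .nil
  | t :: ts => .cons (treeSort_complete t) (configSort_complete ts)
end

theorem TBoxes_fig_inv {i : ℕ} {A : Ty (i+1)} {args : Fin (i+1) → List BTree} {n : ℕ}
    (h : TBoxes (.fig A args) n) :
    ∃ ns : Fin (i+1) → ℕ, (∀ k, CBoxes (args k) (ns k)) ∧ n = Finset.univ.sum ns := by
  cases h with | fig _ _ ns hns => exact ⟨ns, hns, rfl⟩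

theorem TBoxes_bfig_inv {i : ℕ} {A : Ty (i+1)} {args : Fin (i+1) → List BTree} {n : ℕ}
    (h : TBoxes (.bfig A args) n) :
    ∃ ns : Fin (i+1) → ℕ, (∀ k, CBoxes (args k) (ns k)) ∧ n = Finset.univ.sum ns + 1 := by
  cases h with | bfig _ _ ns hns => exact ⟨ns, hns, rfl⟩

theorem TreeSort_fig_inv {i : ℕ} {A : Ty (i+1)} {args : Fin (i+1) → List BTree} {n : ℕ}
    (h : TreeSort (.fig A args) n) :
    ∃ ns : Fin (i+1) → ℕ, (∀ k, ConfigSort (args k) (ns k)) ∧ n = Finset.univ.sum ns := by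
  cases h with | fig _ _ ns hns => exact ⟨ns, hns, rfl⟩

theorem TreeSort_bfig_inv {i : ℕ} {A : Ty (i+1)} {args : Fin (i+1) → List BTree} {n : ℕ}
    (h : TreeSort (.bfig A args) n) :
    ∃ ns : Fin (i+1) → ℕ, (∀ k, ConfigSort (args k) (ns k)) ∧ n = Finset.univ.sum ns := by
  cases h with | bfig _ _ ns hns => exact ⟨ns, hns, rfl⟩

mutual
theorem tboxes_sound : ∀ (t : BTree) (n : ℕ), TBoxes t n → tboxes t = n
  | .sep, _, h => by cases h; rfl
  | .type0 _, _, h => by cases h; rfl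
  | .btype0 _, _, h => by cases h; rfl
  | .fig A args, n, h =>
      have ⟨ns, hns, he⟩ := TBoxes_fig_inv h
      by rw [tboxes_fig_def, he]
         exact Finset.sum_congr rfl (fun k _ => cboxes_sound (args k) (ns k) (hns k))
  | .bfig A args, n, h =>
      have ⟨ns, hns, he⟩ := TBoxes_bfig_inv h
      by rw [tboxes_bfig_def, he]
         exact congrArg (· + 1)
           (Finset.sum_congr rfl (fun k _ => cboxes_sound (args k) (ns k) (hns k)))
theorem cboxes_sound : ∀ (Δ : List BTree) (n : ℕ), CBoxes Δ n → cboxes Δ = n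
  | [], _, h => by cases h; rfl
  | t :: ts, _, h => by
      cases h with
      | cons h1 h2 => simp only [cboxes]
                      rw [tboxes_sound t _ h1, cboxes_sound ts _ h2]
end

mutual
theorem tsort_sound : ∀ (t : BTree) (n : ℕ), TreeSort t n → tsort t = n
  | .sep, _, h => by cases h; rfl
  | .type0 _, _, h => by cases h; rfl
  | .btype0 _, _, h => by cases h; rfl
  | .fig A args, n, h =>
      have ⟨ns, hns, he⟩ := TreeSort_fig_inv h
      by rw [tsort_fig_def, he]
         exact Finset.sum_congr rfl (fun k _ => csort_sound (args k) (ns k) (hns k))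
  | .bfig A args, n, h =>
      have ⟨ns, hns, he⟩ := TreeSort_bfig_inv h
      by rw [tsort_bfig_def, he]
         exact Finset.sum_congr rfl (fun k _ => csort_sound (args k) (ns k) (hns k))
theorem csort_sound : ∀ (Δ : List BTree) (n : ℕ), ConfigSort Δ n → csort Δ = n
  | [], _, h => by cases h; rfl
  | t :: ts, _, h => by
      cases h with
      | cons h1 h2 => simp only [csort]
                      rw [tsort_sound t _ h1, csort_sound ts _ h2]
end


-- inversion lemmas for FoldT / FoldC
theorem FoldT_sep_inv {r : List BConfig} {c : BConfig} (h : FoldT .sep r c) : r = [c] := by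
  cases h; rfl

theorem FoldT_type0_inv {A : Ty 0} {r : List BConfig} {c : BConfig}
    (h : FoldT (.type0 A) r c) : r = [] ∧ c = [.type0 A] := by cases h; exact ⟨rfl, rfl⟩

theorem FoldT_btype0_inv {A : Ty 0} {r : List BConfig} {c : BConfig}
    (h : FoldT (.btype0 A) r c) : r = [] ∧ c = [.btype0 A] := by cases h; exact ⟨rfl, rfl⟩

theorem FoldT_fig_inv {i : ℕ} {A : Ty (i+1)} {args : Fin (i+1) → BConfig}
    {r : List BConfig} {c : BConfig} (h : FoldT (.fig A args) r c) :
    ∃ (args' : Fin (i+1) → BConfig) (reps : Fin (i+1) → List BConfig),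
      (∀ k, FoldC (args k) (reps k) (args' k)) ∧
      r = (List.ofFn reps).flatten ∧ c = [.fig A args'] := by
  cases h with | fig _ _ args' reps hf => exact ⟨args', reps, hf, rfl, rfl⟩

theorem FoldT_bfig_inv {i : ℕ} {A : Ty (i+1)} {args : Fin (i+1) → BConfig}
    {r : List BConfig} {c : BConfig} (h : FoldT (.bfig A args) r c) :
    ∃ (args' : Fin (i+1) → BConfig) (reps : Fin (i+1) → List BConfig),
      (∀ k, FoldC (args k) (reps k) (args' k)) ∧
      r = (List.ofFn reps).flatten ∧ c = [.bfig A args'] := by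
  cases h with | bfig _ _ args' reps hf => exact ⟨args', reps, hf, rfl, rfl⟩

theorem FoldC_nil_inv {r : List BConfig} {c : BConfig} (h : FoldC [] r c) :
    r = [] ∧ c = [] := by cases h; exact ⟨rfl, rfl⟩

theorem FoldC_cons_inv {t : BTree} {ts : BConfig} {r : List BConfig} {c : BConfig}
    (h : FoldC (t :: ts) r c) :
    ∃ r1 r2 c1 c2, FoldT t r1 c1 ∧ FoldC ts r2 c2 ∧ r = r1 ++ r2 ∧ c = c1 ++ c2 := by
  cases h with | cons h1 h2 => exact ⟨_, _, _, _, h1, h2, rfl, rfl⟩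

theorem flatten_ofFn_replicate {α : Type _} (a : α) :
    ∀ (n : ℕ) (f : Fin n → ℕ),
      (List.ofFn (fun k => List.replicate (f k) a)).flatten =
        List.replicate ((List.ofFn f).sum) a
  | 0, f => by simp
  | n + 1, f => by
      simp only [List.ofFn_succ, List.flatten_cons, List.sum_cons,
        flatten_ofFn_replicate a n (fun k => f k.succ), List.replicate_add]

-- identity fold
mutual
theorem foldT_id : ∀ t : BTree, FoldT t (List.replicate (tsort t) [BTree.sep]) [t]
  | .sep => FoldT.sep [BTree.sep]
  | .type0 A => FoldT.type0 A
  | .btype0 A => FoldT.btype0 A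
  | .fig A args => by
      have h := FoldT.fig A args args (fun k => List.replicate (csort (args k)) [BTree.sep])
        (fun k => foldC_id (args k))
      rwa [flatten_ofFn_replicate, show (List.ofFn fun k => csort (args k)).sum
        = tsort (.fig A args) from (by simp only [tsort])] at h
  | .bfig A args => by
      have h := FoldT.bfig A args args (fun k => List.replicate (csort (args k)) [BTree.sep])
        (fun k => foldC_id (args k))
      rwa [flatten_ofFn_replicate, show (List.ofFn fun k => csort (args k)).sum
        = tsort (.bfig A args) from (by simp only [tsort])] at h
theorem foldC_id : ∀ Δ : BConfig, FoldC Δ (List.replicate (csort Δ) [BTree.sep]) Δ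
  | [] => FoldC.nil
  | t :: ts => by
      have h := FoldC.cons (foldT_id t) (foldC_id ts)
      rwa [← List.replicate_add, show tsort t + csort ts = csort (t :: ts) from rfl,
        List.singleton_append] at h
end


mutual
theorem foldT_boxes : ∀ (t : BTree) (r : List BConfig) (c : BConfig), FoldT t r c →
    cboxes c = tboxes t + (r.map cboxes).sum
  | .sep, r, c, h => by rw [FoldT_sep_inv h]; simp [tboxes]
  | .type0 A, r, c, h => by
      obtain ⟨hr, hc⟩ := FoldT_type0_inv h; subst hr hc; simp [cboxes, tboxes]
  | .btype0 A, r, c, h => by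
      obtain ⟨hr, hc⟩ := FoldT_btype0_inv h; subst hr hc; simp [cboxes, tboxes]
  | .fig A args, r, c, h =>
      have ⟨args', reps, hf, hr, hc⟩ := FoldT_fig_inv h
      have IH : ∀ k, cboxes (args' k) = cboxes (args k) + ((reps k).map cboxes).sum :=
        fun k => foldC_boxes (args k) (reps k) (args' k) (hf k)
      by subst hr hc
         simp only [cboxes, tboxes_fig_def, Nat.add_zero, List.map_flatten, List.map_ofFn,
           List.sum_flatten, List.sum_ofFn, Function.comp]
         rw [← Finset.sum_add_distrib]
         exact Finset.sum_congr rfl (fun k _ => IH k)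
  | .bfig A args, r, c, h =>
      have ⟨args', reps, hf, hr, hc⟩ := FoldT_bfig_inv h
      have IH : ∀ k, cboxes (args' k) = cboxes (args k) + ((reps k).map cboxes).sum :=
        fun k => foldC_boxes (args k) (reps k) (args' k) (hf k)
      by subst hr hc
         simp only [cboxes, tboxes_bfig_def, Nat.add_zero, List.map_flatten, List.map_ofFn,
           List.sum_flatten, List.sum_ofFn, Function.comp]
         have hs : ∑ k, cboxes (args' k)
             = ∑ k, (cboxes (args k) + ((reps k).map cboxes).sum) :=
           Finset.sum_congr rfl (fun k _ => IH k)
         rw [Finset.sum_add_distrib] at hs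
         omega
theorem foldC_boxes : ∀ (Γ : BConfig) (L : List BConfig) (res : BConfig), FoldC Γ L res →
    cboxes res = cboxes Γ + (L.map cboxes).sum
  | [], L, res, h => by
      obtain ⟨hL, hres⟩ := FoldC_nil_inv h; subst hL hres; simp [cboxes]
  | t :: ts, L, res, h =>
      have ⟨r1, r2, c1, c2, h1, h2, hL, hres⟩ := FoldC_cons_inv h
      have IH1 := foldT_boxes t r1 c1 h1
      have IH2 := foldC_boxes ts r2 c2 h2
      by subst hL hres
         have hap : ∀ a b : BConfig, cboxes (a ++ b) = cboxes a + cboxes b := by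
           intro a b; induction a with
           | nil => simp [cboxes]
           | cons x xs ih => simp [cboxes, ih]; omega
         simp only [hap, List.map_append, List.sum_append, cboxes]
         omega
end

mutual
theorem foldT_sort : ∀ (t : BTree) (r : List BConfig) (c : BConfig), FoldT t r c →
    csort c + r.length = tsort t + (r.map csort).sum
  | .sep, r, c, h => by rw [FoldT_sep_inv h]; simp [tsort]; omega
  | .type0 A, r, c, h => by
      obtain ⟨hr, hc⟩ := FoldT_type0_inv h; subst hr hc; simp [csort, tsort]
  | .btype0 A, r, c, h => by
      obtain ⟨hr, hc⟩ := FoldT_btype0_inv h; subst hr hc; simp [csort, tsort]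
  | .fig A args, r, c, h =>
      have ⟨args', reps, hf, hr, hc⟩ := FoldT_fig_inv h
      have IH : ∀ k, csort (args' k) + (reps k).length
          = csort (args k) + ((reps k).map csort).sum :=
        fun k => foldC_sort (args k) (reps k) (args' k) (hf k)
      by subst hr hc
         simp only [csort, tsort_fig_def, Nat.add_zero, List.map_flatten, List.map_ofFn,
           List.sum_flatten, List.sum_ofFn, List.length_flatten, Function.comp]
         rw [← Finset.sum_add_distrib, ← Finset.sum_add_distrib]
         exact Finset.sum_congr rfl (fun k _ => IH k)
  | .bfig A args, r, c, h =>
      have ⟨args', reps, hf, hr, hc⟩ := FoldT_bfig_inv h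
      have IH : ∀ k, csort (args' k) + (reps k).length
          = csort (args k) + ((reps k).map csort).sum :=
        fun k => foldC_sort (args k) (reps k) (args' k) (hf k)
      by subst hr hc
         simp only [csort, tsort_bfig_def, Nat.add_zero, List.map_flatten, List.map_ofFn,
           List.sum_flatten, List.sum_ofFn, List.length_flatten, Function.comp]
         rw [← Finset.sum_add_distrib, ← Finset.sum_add_distrib]
         exact Finset.sum_congr rfl (fun k _ => IH k)
theorem foldC_sort : ∀ (Γ : BConfig) (L : List BConfig) (res : BConfig), FoldC Γ L res →
    csort res + L.length = csort Γ + (L.map csort).sum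
  | [], L, res, h => by
      obtain ⟨hL, hres⟩ := FoldC_nil_inv h; subst hL hres; simp [csort]
  | t :: ts, L, res, h =>
      have ⟨r1, r2, c1, c2, h1, h2, hL, hres⟩ := FoldC_cons_inv h
      have IH1 := foldT_sort t r1 c1 h1
      have IH2 := foldC_sort ts r2 c2 h2
      by subst hL hres
         have hap : ∀ a b : BConfig, csort (a ++ b) = csort a + csort b := by
           intro a b; induction a with
           | nil => simp [csort]
           | cons x xs ih => simp [csort, ih]; omega
         simp only [hap, List.map_append, List.sum_append, csort, List.length_append]
         omega
end

theorem cboxes_append (a b : BConfig) : cboxes (a ++ b) = cboxes a + cboxes b := by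
  induction a with
  | nil => simp [cboxes]
  | cons x xs ih => simp [cboxes, ih]; omega

theorem csort_append (a b : BConfig) : csort (a ++ b) = csort a + csort b := by
  induction a with
  | nil => simp [csort]
  | cons x xs ih => simp [csort, ih]; omega


theorem PlugT_fig_inv {i : ℕ} {A : Ty (i+1)} {args : Fin (i+1) → BConfig} {k : Fin (i+1)}
    {c : CHole} {Γ : BConfig} {tr : BTree} (h : PlugT (.fig A args k c) Γ tr) :
    ∃ plugged, PlugC c Γ plugged ∧ tr = .fig A (Function.update args k plugged) := by
  cases h with | fig _ _ _ _ _ plugged hp => exact ⟨plugged, hp, rfl⟩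

theorem PlugT_bfig_inv {i : ℕ} {A : Ty (i+1)} {args : Fin (i+1) → BConfig} {k : Fin (i+1)}
    {c : CHole} {Γ : BConfig} {tr : BTree} (h : PlugT (.bfig A args k c) Γ tr) :
    ∃ plugged, PlugC c Γ plugged ∧ tr = .bfig A (Function.update args k plugged) := by
  cases h with | bfig _ _ _ _ _ plugged hp => exact ⟨plugged, hp, rfl⟩

theorem PlugC_top_inv {pre post Γ res : BConfig} (h : PlugC (.top pre post) Γ res) :
    res = pre ++ Γ ++ post := by cases h; rfl

theorem PlugC_deep_inv {pre post Γ res : BConfig} {t : THole}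
    (h : PlugC (.deep pre t post) Γ res) :
    ∃ tr, PlugT t Γ tr ∧ res = pre ++ tr :: post := by
  cases h with | deep _ _ _ _ tr hp => exact ⟨tr, hp, rfl⟩

theorem sum_update {i : ℕ} (f : Fin (i+1) → ℕ) (k : Fin (i+1)) (b : ℕ) :
    ∑ m, Function.update f k b m + f k = ∑ m, f m + b := by
  rw [Finset.sum_update_of_mem (Finset.mem_univ k)]
  have h2 : ∑ m ∈ {k}ᶜ, f m + ∑ m ∈ {k}, f m = ∑ m, f m := Finset.sum_compl_add_sum {k} f
  rw [Finset.sum_singleton] at h2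
  rw [Finset.compl_eq_univ_sdiff] at h2
  omega

mutual
theorem plugT_boxes : ∀ (h : THole) (Γ : BConfig) (tr : BTree) (Γ' : BConfig) (tr' : BTree),
    PlugT h Γ tr → PlugT h Γ' tr' → tboxes tr + cboxes Γ' = tboxes tr' + cboxes Γ
  | .fig A args k c, Γ, tr, Γ', tr', h1, h2 => by
      obtain ⟨p, hp, hptr⟩ := PlugT_fig_inv h1
      obtain ⟨p', hp', hptr'⟩ := PlugT_fig_inv h2
      have IH := plugC_boxes c Γ p Γ' p' hp hp'
      subst hptr hptr'
      have hfun : ∀ (q : BConfig) m, cboxes (Function.update args k q m)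
          = Function.update (fun m => cboxes (args m)) k (cboxes q) m :=
        fun q m => Function.apply_update (fun _ x => cboxes x) args k q m
      have e1 : tboxes (.fig A (Function.update args k p)) + cboxes (args k)
          = (∑ m, cboxes (args m)) + cboxes p := by
        rw [tboxes_fig_def, Finset.sum_congr rfl (fun m _ => hfun p m)]
        exact sum_update _ k _
      have e2 : tboxes (.fig A (Function.update args k p')) + cboxes (args k)
          = (∑ m, cboxes (args m)) + cboxes p' := by
        rw [tboxes_fig_def, Finset.sum_congr rfl (fun m _ => hfun p' m)]
        exact sum_update _ k _
      omega
  | .bfig A args k c, Γ, tr, Γ', tr', h1, h2 => by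
      obtain ⟨p, hp, hptr⟩ := PlugT_bfig_inv h1
      obtain ⟨p', hp', hptr'⟩ := PlugT_bfig_inv h2
      have IH := plugC_boxes c Γ p Γ' p' hp hp'
      subst hptr hptr'
      have hfun : ∀ (q : BConfig) m, cboxes (Function.update args k q m)
          = Function.update (fun m => cboxes (args m)) k (cboxes q) m :=
        fun q m => Function.apply_update (fun _ x => cboxes x) args k q m
      have e1 : tboxes (.bfig A (Function.update args k p)) + cboxes (args k)
          = (∑ m, cboxes (args m)) + cboxes p + 1 := by
        rw [tboxes_bfig_def, Finset.sum_congr rfl (fun m _ => hfun p m)]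
        have h1 := sum_update (fun m => cboxes (args m)) k (cboxes p)
        have h2 : Finset.univ.sum (Function.update (fun m => cboxes (args m)) k (cboxes p))
            = ∑ m, Function.update (fun m => cboxes (args m)) k (cboxes p) m := rfl
        have h3 : Finset.univ.sum (fun m => cboxes (args m)) = ∑ m, cboxes (args m) := rfl
        omega
      have e2 : tboxes (.bfig A (Function.update args k p')) + cboxes (args k)
          = (∑ m, cboxes (args m)) + cboxes p' + 1 := by
        rw [tboxes_bfig_def, Finset.sum_congr rfl (fun m _ => hfun p' m)]
        have h1 := sum_update (fun m => cboxes (args m)) k (cboxes p')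
        have h2 : Finset.univ.sum (Function.update (fun m => cboxes (args m)) k (cboxes p'))
            = ∑ m, Function.update (fun m => cboxes (args m)) k (cboxes p') m := rfl
        have h3 : Finset.univ.sum (fun m => cboxes (args m)) = ∑ m, cboxes (args m) := rfl
        omega
      omega
theorem plugC_boxes : ∀ (h : CHole) (Γ res Γ' res' : BConfig),
    PlugC h Γ res → PlugC h Γ' res' → cboxes res + cboxes Γ' = cboxes res' + cboxes Γ
  | .top pre post, Γ, res, Γ', res', h1, h2 => by
      rw [PlugC_top_inv h1, PlugC_top_inv h2]; simp only [cboxes_append]; omega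
  | .deep pre t post, Γ, res, Γ', res', h1, h2 => by
      obtain ⟨tr, hp, hres⟩ := PlugC_deep_inv h1
      obtain ⟨tr', hp', hres'⟩ := PlugC_deep_inv h2
      have IH := plugT_boxes t Γ tr Γ' tr' hp hp'
      subst hres hres'
      simp only [cboxes_append, cboxes]
      omega
end

theorem sub_boxes {Z : Zone} {Γ1 s1 Γ2 s2 : BConfig} (h1 : Sub Z Γ1 s1) (h2 : Sub Z Γ2 s2)
    (he : cboxes Γ1 = cboxes Γ2) : cboxes s1 = cboxes s2 := by
  obtain ⟨f1, hf1, hp1⟩ := h1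
  obtain ⟨f2, hf2, hp2⟩ := h2
  have b1 := foldC_boxes _ _ _ hf1
  have b2 := foldC_boxes _ _ _ hf2
  have := plugC_boxes Z.hole f1 s1 f2 s2 hp1 hp2
  omega


@[simp] theorem cboxes_sep : cboxes [BTree.sep] = 0 := rfl
@[simp] theorem csort_sep : csort [BTree.sep] = 1 := rfl

@[simp] theorem cboxes_vec {i : ℕ} (A : Ty i) : cboxes (vec A) = 0 := by
  cases i with
  | zero => rfl
  | succ n =>
    show cboxes [BTree.fig A (fun _ => [BTree.sep])] = 0
    simp [cboxes, tboxes]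

@[simp] theorem cboxes_bvec {i : ℕ} (A : Ty i) : cboxes (bvec A) = 1 := by
  cases i with
  | zero => rfl
  | succ n =>
    show cboxes [BTree.bfig A (fun _ => [BTree.sep])] = 1
    simp [cboxes, tboxes]

@[simp] theorem csort_vec {i : ℕ} (A : Ty i) : csort (vec A) = i := by
  cases i with
  | zero => rfl
  | succ n =>
    show csort [BTree.fig A (fun _ => [BTree.sep])] = n + 1
    simp [csort, tsort]; omega

@[simp] theorem csort_bvec {i : ℕ} (A : Ty i) : csort (bvec A) = i := by
  cases i with
  | zero => rfl
  | succ n =>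
    show csort [BTree.bfig A (fun _ => [BTree.sep])] = n + 1
    simp [csort, tsort]; omega

@[simp] theorem cboxes_fvec {i : ℕ} (A : Ty i) (h : posb A = true) : cboxes (fvec A) = 0 := by
  simp [fvec, h]

@[simp] theorem csort_fvec {i : ℕ} (A : Ty i) : csort (fvec A) = i := by
  unfold fvec; split <;> simp

theorem amo_of_zero {Δ : BConfig} {f : Bool} (h : cboxes Δ = 0) : AtMostOne Δ f := by
  have hc : CBoxes Δ 0 := h ▸ cboxes_complete Δ
  cases f
  · exact Or.inl hc
  · exact hc

theorem amo_of_one {Δ : BConfig} (h : cboxes Δ = 1) : AtMostOne Δ false :=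
  Or.inr (h ▸ cboxes_complete Δ)

theorem okf {Δ : BConfig} {f : Bool} {i : ℕ} {A : Ty i} : Ok false Δ f i A :=
  fun h => Bool.noConfusion h

/-- The identity context of sort `n`. -/
def idZone (n : ℕ) : Zone := ⟨.top [] [], List.replicate n [BTree.sep]⟩

theorem sub_id (Δ : BConfig) : Sub (idZone (csort Δ)) Δ Δ :=
  ⟨Δ, foldC_id Δ, by simpa [idZone] using PlugC.top [] [] Δ⟩

theorem sub_id' {Δ : BConfig} {n : ℕ} (h : csort Δ = n) : Sub (idZone n) Δ Δ :=
  h ▸ sub_id Δ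

theorem sum_set_replicate (a b : ℕ) :
    ∀ (n m : ℕ), m < n → ((List.replicate n a).set m b).sum = (n-1)*a + b
  | n+1, 0, _ => by simp [List.replicate_succ, List.sum_replicate]; omega
  | n+1, m+1, h => by
      have hm : m < n := by omega
      simp only [List.replicate_succ, List.set_cons_succ, List.sum_cons,
        sum_set_replicate a b n m hm]
      cases n with
      | zero => omega
      | succ n' => simp [Nat.succ_mul]; omega

theorem wrap_boxes {Δ Γ w : BConfig} {k : ℕ} (h : Wrap Δ k Γ w) (hk : k - 1 < csort Δ) :
    cboxes w = cboxes Δ + cboxes Γ := by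
  obtain ⟨n, hs, hf⟩ := h
  have hn : csort Δ = n := csort_sound Δ n hs
  subst hn
  have hb := foldC_boxes _ _ _ hf
  rw [List.map_set, List.map_replicate] at hb
  rw [hb, sum_set_replicate _ _ _ _ hk]
  simp

theorem wrap_sort {Δ Γ w : BConfig} {k : ℕ} (h : Wrap Δ k Γ w) (hk : k - 1 < csort Δ) :
    csort w + 1 = csort Δ + csort Γ := by
  obtain ⟨n, hs, hf⟩ := h
  have hn : csort Δ = n := csort_sound Δ n hs
  subst hn
  have hb := foldC_sort _ _ _ hf
  rw [List.map_set, List.map_replicate, List.length_set, List.length_replicate] at hb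
  rw [sum_set_replicate _ _ _ _ hk] at hb
  simp at hb
  omega


theorem vec_succ {i : ℕ} (A : Ty (i+1)) :
    vec A = [BTree.fig A (fun _ => [BTree.sep])] := rfl

theorem bvec_succ {i : ℕ} (A : Ty (i+1)) :
    bvec A = [BTree.bfig A (fun _ => [BTree.sep])] := rfl

theorem flatten_ofFn_singleton {α : Type _} :
    ∀ (n : ℕ) (g : Fin n → List α), (List.ofFn (fun m => [g m])).flatten = List.ofFn g
  | 0, g => by simp
  | n+1, g => by
      simp only [List.ofFn_succ, List.flatten_cons, flatten_ofFn_singleton n (fun m => g m.succ)]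
      rfl

theorem ofFn_ite_eq_set (n k : ℕ) (hk : k < n) (Γ : BConfig) :
    List.ofFn (fun m : Fin n => if (m : ℕ) = k then Γ else [BTree.sep])
      = (List.replicate n ([BTree.sep] : BConfig)).set k Γ := by
  apply List.ext_getElem
  · simp
  · intro m h1 h2
    simp [List.getElem_ofFn, List.getElem_set, List.getElem_replicate]
    split <;> simp_all [eq_comm]

/-- The canonical wrap of the figure of a type by `Γ` at position `k`. -/
theorem wrap_fig {i : ℕ} (A : Ty (i+1)) (k : ℕ) (hk1 : 1 ≤ k) (hk2 : k ≤ i + 1)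
    (Γ : BConfig) :
    Wrap (vec A) k Γ
      [BTree.fig A (fun m => if (m : ℕ) = k - 1 then Γ else [BTree.sep])] := by
  refine ⟨i + 1, ?_, ?_⟩
  · have h := configSort_complete (vec A)
    rwa [csort_vec] at h
  · rw [vec_succ]
    have hT := FoldT.fig A (fun _ => [BTree.sep])
      (fun m => if (m : ℕ) = k - 1 then Γ else [BTree.sep])
      (fun m => [if (m : ℕ) = k - 1 then Γ else [BTree.sep]])
      (fun m => by
        simpa using FoldC.cons
          (FoldT.sep (if (m : ℕ) = k - 1 then Γ else [BTree.sep])) FoldC.nil)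
    rw [flatten_ofFn_singleton, ofFn_ite_eq_set (i+1) (k-1) (by omega) Γ] at hT
    simpa using FoldC.cons hT FoldC.nil

theorem wrap_bfig {i : ℕ} (A : Ty (i+1)) (k : ℕ) (hk1 : 1 ≤ k) (hk2 : k ≤ i + 1)
    (Γ : BConfig) :
    Wrap (bvec A) k Γ
      [BTree.bfig A (fun m => if (m : ℕ) = k - 1 then Γ else [BTree.sep])] := by
  refine ⟨i + 1, ?_, ?_⟩
  · have h := configSort_complete (bvec A)
    rwa [csort_bvec] at h
  · rw [bvec_succ]
    have hT := FoldT.bfig A (fun _ => [BTree.sep])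
      (fun m => if (m : ℕ) = k - 1 then Γ else [BTree.sep])
      (fun m => [if (m : ℕ) = k - 1 then Γ else [BTree.sep]])
      (fun m => by
        simpa using FoldC.cons
          (FoldT.sep (if (m : ℕ) = k - 1 then Γ else [BTree.sep])) FoldC.nil)
    rw [flatten_ofFn_singleton, ofFn_ite_eq_set (i+1) (k-1) (by omega) Γ] at hT
    simpa using FoldC.cons hT FoldC.nil


/-- Size of a type (for termination of identity expansion). -/
def tysize : ∀ {i : ℕ}, Ty i → ℕ
  | _, .atom _ _ _ => 1
  | _, .over C B => tysize C + tysize B + 1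
  | _, .under A C => tysize A + tysize C + 1
  | _, .prod A B => tysize A + tysize B + 1
  | _, .unitI => 1
  | _, .circ _ _ C B => tysize C + tysize B + 1
  | _, .infx _ _ A C => tysize A + tysize C + 1
  | _, .wprod _ _ A B => tysize A + tysize B + 1
  | _, .unitJ => 1
  | _, .amp A B => tysize A + tysize B + 1
  | _, .oplus A B => tysize A + tysize B + 1

mutual

/-- Focalised identity for positive types. -/
theorem identP : ∀ {i : ℕ} (A : Ty i), posb A = true → DW true false (vec A) true i A
  | _, .atom .pos name j, _ => DW.idP name j
  | _, .atom .neg _ _, h => by simp [posb] at h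
  | _, .over _ _, h => by simp [posb] at h
  | _, .under _ _, h => by simp [posb] at h
  | _, .prod A B, _ => by
      apply DW.prodL (Z := idZone _) (A := A) (B := B) (f := true)
      · exact sub_id' (by rw [csort_append, csort_vec, csort_vec])
      · exact DW.prodR (ident A) (ident B)
          (amo_of_zero (by rw [cboxes_append, cboxes_vec, cboxes_vec])) okf
      · exact sub_id' (csort_vec _)
      · exact amo_of_zero (cboxes_vec _)
      · exact okf
  | _, .unitI, _ => by
      apply DW.unitIL (Z := idZone 0) (f := true)
      · exact sub_id' rfl
      · exact DW.unitIR
      · exact sub_id' (csort_vec _)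
      · exact amo_of_zero (cboxes_vec _)
      · exact okf
  | _, .wprod (i := a) (j := b) k hk A B, _ => by
      have hw := wrap_fig A k hk.1 hk.2 (vec B)
      have hkc : k - 1 < csort (vec A) := by rw [csort_vec]; omega
      have hwb : cboxes [BTree.fig A fun m => if (m : ℕ) = k - 1 then vec B
          else [BTree.sep]] = 0 := by
        rw [wrap_boxes hw hkc, cboxes_vec, cboxes_vec]
      have hws : csort [BTree.fig A fun m => if (m : ℕ) = k - 1 then vec B
          else [BTree.sep]] = a + b := by
        have := wrap_sort hw hkc
        rw [csort_vec, csort_vec] at this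
        omega
      apply DW.wprodL k hk (Z := idZone (a + b)) (f := true) (A := A) (B := B)
      · exact hw
      · exact sub_id' hws
      · exact DW.wprodR k hk (ident A) (ident B) hw (amo_of_zero hwb) okf
      · exact sub_id' (csort_vec _)
      · exact amo_of_zero (cboxes_vec _)
      · exact okf
  | _, .unitJ, _ => by
      apply DW.unitJL (Z := idZone 1) (f := true)
      · exact sub_id' rfl
      · exact DW.unitJR
      · exact sub_id' (csort_vec _)
      · exact amo_of_zero (cboxes_vec _)
      · exact okf
  | _, .oplus A B, _ => by
      apply DW.oplusL (Z := idZone _) (f := true) (A := A) (B := B)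
      · exact sub_id' (csort_vec _)
      · exact DW.oplusR1 (ident A) (amo_of_zero (cboxes_vec _)) okf
      · exact sub_id' (csort_vec _)
      · exact DW.oplusR2 (ident B) (amo_of_zero (cboxes_vec _)) okf
      · exact sub_id' (csort_vec _)
      · exact amo_of_zero (cboxes_vec _)
      · exact okf
termination_by _ A _ => 2 * tysize A
decreasing_by all_goals simp [tysize] <;> omega

/-- Focalised identity for negative types. -/
theorem identN : ∀ {i : ℕ} (A : Ty i), posb A = false → DW true false (bvec A) false i A
  | _, .atom .neg name j, _ => DW.idQ name j
  | _, .atom .pos _ _, h => by simp [posb] at h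
  | _, .prod _ _, h => by simp [posb] at h
  | _, .unitI, h => by simp [posb] at h
  | _, .wprod _ _ _ _, h => by simp [posb] at h
  | _, .unitJ, h => by simp [posb] at h
  | _, .oplus _ _, h => by simp [posb] at h
  | _, .over (i := a) (j := b) C B, _ => by
      apply DW.overR (i := a) (j := b)
      · apply DW.overL (Z := idZone (a + b)) (Γ := vec B) (B := B) (C := C)
        · exact ident B
        · exact sub_id' (csort_fvec C)
        · exact fident C
        · exact sub_id' (by rw [csort_append, csort_bvec, csort_vec])
        · exact amo_of_one (by rw [cboxes_append, cboxes_bvec, cboxes_vec])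
        · exact okf
      · exact amo_of_one (cboxes_bvec _)
      · exact okf
  | _, .under (i := a) (j := b) A C, _ => by
      apply DW.underR (i := a) (j := b)
      · apply DW.underL (Z := idZone (a + b)) (Γ := vec A) (A := A) (C := C)
        · exact ident A
        · exact sub_id' (csort_fvec C)
        · exact fident C
        · exact sub_id' (by rw [csort_append, csort_vec, csort_bvec])
        · exact amo_of_one (by rw [cboxes_append, cboxes_vec, cboxes_bvec])
        · exact okf
      · exact amo_of_one (cboxes_bvec _)
      · exact okf
  | _, .circ (i := a) (j := b) k hk C B, _ => by
      have hw := wrap_bfig (.circ k hk C B) k hk.1 hk.2 (vec B)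
      have hkc : k - 1 < csort (bvec (.circ k hk C B)) := by rw [csort_bvec]; omega
      have hwb : cboxes [BTree.bfig (Ty.circ k hk C B) fun m => if (m : ℕ) = k - 1 then vec B
          else [BTree.sep]] = 1 := by
        rw [wrap_boxes hw hkc, cboxes_bvec, cboxes_vec]
      have hws : csort [BTree.bfig (Ty.circ k hk C B) fun m => if (m : ℕ) = k - 1 then vec B
          else [BTree.sep]] = a + b := by
        have := wrap_sort hw hkc
        rw [csort_bvec, csort_vec] at this
        omega
      apply DW.circR k hk (B := B) (C := C)
      · exact hw
      · apply DW.circL k hk (Γ := vec B) (Z := idZone (a + b)) (B := B) (C := C)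
        · exact ident B
        · exact sub_id' (csort_fvec C)
        · exact fident C
        · exact hw
        · exact sub_id' hws
        · exact amo_of_one hwb
        · exact okf
      · exact amo_of_one (cboxes_bvec _)
      · exact okf
  | _, .infx (i := a) (j := b) k hk A C, _ => by
      have hw := wrap_fig A k hk.1 hk.2 (bvec (.infx k hk A C))
      have hkc : k - 1 < csort (vec A) := by rw [csort_vec]; omega
      have hwb : cboxes [BTree.fig A fun m => if (m : ℕ) = k - 1
          then bvec (Ty.infx k hk A C) else [BTree.sep]] = 1 := by
        rw [wrap_boxes hw hkc, cboxes_vec, cboxes_bvec]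
      have hws : csort [BTree.fig A fun m => if (m : ℕ) = k - 1
          then bvec (Ty.infx k hk A C) else [BTree.sep]] = a + b := by
        have := wrap_sort hw hkc
        rw [csort_vec, csort_bvec] at this
        omega
      apply DW.infxR k hk (A := A) (C := C)
      · exact hw
      · apply DW.infxL k hk (Γ := vec A) (Z := idZone (a + b)) (A := A) (C := C)
        · exact ident A
        · exact sub_id' (csort_fvec C)
        · exact fident C
        · exact hw
        · exact sub_id' hws
        · exact amo_of_one hwb
        · exact okf
      · exact amo_of_one (cboxes_bvec _)
      · exact okf
  | _, .amp A B, _ => by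
      apply DW.ampR
      · apply DW.ampL1 (Z := idZone _) (A := A) (B := B)
        · exact sub_id' (csort_fvec A)
        · exact fident A
        · exact sub_id' (csort_bvec _)
        · exact amo_of_one (cboxes_bvec _)
        · exact okf
      · apply DW.ampL2 (Z := idZone _) (A := A) (B := B)
        · exact sub_id' (csort_fvec B)
        · exact fident B
        · exact sub_id' (csort_bvec _)
        · exact amo_of_one (cboxes_bvec _)
        · exact okf
      · exact amo_of_one (cboxes_bvec _)
      · exact okf
termination_by _ A _ => 2 * tysize A
decreasing_by all_goals simp [tysize] <;> omega

/-- Identity expansion: `vec(A) ⊢ A` with focus according to the polarity of `A`. -/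
theorem ident {i : ℕ} (A : Ty i) : DW true false (vec A) (posb A) i A := by
  cases hp : posb A with
  | true => exact identP A hp
  | false =>
      exact DW.focL hp (sub_id' (csort_bvec A)) (identN A hp) (sub_id' (csort_vec A))
        (amo_of_zero (cboxes_vec A)) okf
termination_by 2 * tysize A + 1
decreasing_by all_goals simp [tysize] <;> omega

/-- Identity for the premise occurrence `fvec A`. -/
theorem fident {i : ℕ} (A : Ty i) : DW true false (fvec A) false i A := by
  cases hp : posb A with
  | true =>
      rw [show fvec A = vec A by simp [fvec, hp]]
      exact DW.focR hp (identP A hp) (amo_of_zero (cboxes_vec A)) okf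
  | false =>
      rw [show fvec A = bvec A by simp [fvec, hp]]
      exact identN A hp
termination_by 2 * tysize A + 1
decreasing_by all_goals simp [tysize] <;> omega

end


theorem amo_transfer {s1 s2 : BConfig} {f : Bool} (he : cboxes s1 = cboxes s2)
    (h : AtMostOne s1 f) : AtMostOne s2 f := by
  cases f
  · have h' : CBoxes s1 0 ∨ CBoxes s1 1 := h
    cases h' with
    | inl h0 => exact amo_of_zero (by rw [← he, cboxes_sound s1 0 h0])
    | inr h1 => exact amo_of_one (by rw [← he, cboxes_sound s1 1 h1])
  · have h' : CBoxes s1 0 := h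
    exact amo_of_zero (by rw [← he, cboxes_sound s1 0 h'])

/-- Invertibility of the left discontinuous product rule in DAf: if
`Δ⟨vec(A ⊙ₖ B)⟩ ⊢w C` (possibly containing one focalised formula, the
indicated occurrence of `A ⊙ₖ B` unfocused) is derivable in DAf, then
`Δ⟨vec(A) |ₖ vec(B)⟩ ⊢w C` (with the same focus, if any) is derivable in
DAf. -/
theorem wprodL_invertible :
    ∀ (i j d : ℕ) (k : ℕ) (hk : 1 ≤ k ∧ k ≤ i + 1) (A : Ty (i + 1)) (B : Ty j)
      (C : Ty d) (Z : Zone) (f : Bool) (s1 w s2 : BConfig),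
      Sub Z (vec (Ty.wprod k hk A B)) s1 → AtMostOne s1 f →
      DAf s1 f d C →
      Wrap (vec A) k (vec B) w → Sub Z w s2 →
      DAf s2 f d C := by
  intro i j d k hk A B C Z f s1 w s2 hsub1 hamo1 hder hw hsub2
  have hkc : k - 1 < csort (vec A) := by rw [csort_vec]; omega
  have hwb : cboxes w = 0 := by rw [wrap_boxes hw hkc, cboxes_vec, cboxes_vec]
  refine DW.pcut1 (P := Ty.wprod k hk A B) (Γ := w) (Z := Z) rfl rfl ?_ hsub1 hder hsub2 ?_
  · exact DW.wprodR k hk (ident A) (ident B) hw (amo_of_zero hwb) okf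
  · refine amo_transfer ?_ hamo1
    exact sub_boxes hsub1 hsub2 (by rw [cboxes_vec, hwb])

end DA
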